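/- Let G be a connected cubic graph with a vertex partition {A, J} such that A induces a forest with exactly two tree components and J is an independent set. Then G has a spanning tree whose cotree has exactly one component with an odd number of edges. -/

import Mathlib

open SimpleGraph Finset

/-- The set of edges of `H` lying in the connected component `c` of `H`. -/
def cotreeCompEdges {V : Type*} (H : SimpleGraph V) (c : H.ConnectedComponent) :
    Set (Sym2 V) :=
  {e | e ∈ H.edgeSet ∧ ∀ v ∈ e, H.connectedComponentMk v = c}

namespace Stmt8Aux

variable {V : Type*}

lemma exists_crossing {G : SimpleGraph V} {X : Set V} :
    ∀ {x y : V}, G.Walk x y → x ∈ X → y ∉ X → ∃ u v, G.Adj u v ∧ u ∈ X ∧ v ∉ X := by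
  intro x y p
  induction p with
  | nil => intro hx hy; exact absurd hx hy
  | @cons a b c h p ih =>
    intro hx hy
    by_cases hb : b ∈ X
    · exact ih hb hy
    · exact ⟨a, b, h, hx, hb⟩

lemma exists_cons_of_ne {T : SimpleGraph V} {x u : V} (hne : x ≠ u) (q : T.Walk x u) :
    ∃ (w : V) (h : T.Adj x w) (q' : T.Walk w u), q = SimpleGraph.Walk.cons h q' := by
  cases q with
  | nil => exact absurd rfl hne
  | cons h q' => exact ⟨_, h, q', rfl⟩

lemma deg_one_no_cycle {T : SimpleGraph V} {x y : V} (hx : ∀ z, T.Adj x z → z = y)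
    (c : T.Walk x x) : ¬ c.IsCycle := by
  intro hc
  cases c with
  | nil => exact Walk.IsCycle.not_of_nil hc
  | @cons _ u _ h p =>
    rw [Walk.cons_isCycle_iff] at hc
    obtain ⟨hp, he⟩ := hc
    obtain ⟨w, hadj, q', hq⟩ := exists_cons_of_ne h.ne p.reverse
    have hw : s(x, w) ∈ p.edges := by
      have h1 : s(x,w) ∈ p.reverse.edges := by rw [hq]; simp
      rw [Walk.edges_reverse] at h1
      exact List.mem_reverse.1 h1
    have h1 : u = y := hx u h
    have h2 : w = y := hx w hadj
    have hs : s(x, u) = s(x, w) := by rw [h1, h2]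
    exact he (hs ▸ hw)

lemma deg_one_not_mem_support [DecidableEq V] {T : SimpleGraph V} {x y : V} (hx : ∀ z, T.Adj x z → z = y)
    {v : V} {c : T.Walk v v} (hc : c.IsCycle) : x ∉ c.support :=
  fun hmem => deg_one_no_cycle hx (c.rotate x hmem) (hc.rotate hmem)



lemma no_cycle_in_part [DecidableEq V] {G T : SimpleGraph V} {A₁ : Finset V}
    (hacy : (G.induce (↑A₁ : Set V)).IsAcyclic)
    (hiff : ∀ x y, x ∈ A₁ → y ∈ A₁ → (T.Adj x y ↔ G.Adj x y))
    {v : V} (c : T.Walk v v) (hc : c.IsCycle) (hsup : ∀ z ∈ c.support, z ∈ A₁) : False := by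
  classical
  let f : G.induce (↑A₁ : Set V) →g T :=
    ⟨Subtype.val, fun {a b} hab => (hiff a.1 b.1 a.2 b.2).2 hab⟩
  have hlift : ∀ {x y : V} (q : T.Walk x y), (∀ z ∈ q.support, z ∈ A₁) →
      ∀ (hx : x ∈ A₁) (hy : y ∈ A₁),
      ∃ q' : (G.induce (↑A₁ : Set V)).Walk ⟨x, hx⟩ ⟨y, hy⟩, q'.map f = q := by
    intro x y q
    induction q with
    | nil => intro _ hx hy; exact ⟨Walk.nil, rfl⟩
    | @cons a b c h q ih =>
      intro hq hx hy
      have hb : b ∈ A₁ := hq b (by simp)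
      obtain ⟨q', hq'⟩ := ih (fun z hz => hq z (by simp [hz])) hb hy
      have hadj : (G.induce (↑A₁ : Set V)).Adj ⟨a, hx⟩ ⟨b, hb⟩ := by
        simp only [comap_adj, Function.Embedding.coe_subtype]
        exact (hiff a b hx hb).1 h
      exact ⟨Walk.cons hadj q', by simp [Walk.map_cons, hq']⟩
  have hv : v ∈ A₁ := hsup v c.start_mem_support
  obtain ⟨q', hq'⟩ := hlift c hsup hv hv
  have hinj : Function.Injective f := Subtype.val_injective
  have : q'.IsCycle := by
    have := (Walk.map_isCycle_iff_of_injective (p := q') hinj).1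
    apply this
    rw [hq']; exact hc
  exact hacy _ this


lemma cycle_cons {T : SimpleGraph V} {x : V} (c : T.Walk x x) (hc : c.IsCycle) :
    ∃ (u : V) (h : T.Adj x u) (p : T.Walk u x), c = SimpleGraph.Walk.cons h p ∧ p.IsPath ∧
      s(x, u) ∉ p.edges := by
  cases c with
  | nil => exact absurd hc Walk.IsCycle.not_of_nil
  | cons h p =>
    rw [Walk.cons_isCycle_iff] at hc
    exact ⟨_, h, p, rfl, hc.1, hc.2⟩

end Stmt8Aux

/-- If a connected cubic graph has a vertex partition `{A, J}` with `A` inducing a forest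
with exactly two tree components and `J` independent, then `G` has a spanning tree whose
cotree has exactly one odd component. -/
theorem stmt8 {V : Type*} [Fintype V] [DecidableEq V] (G : SimpleGraph V)
    [DecidableRel G.Adj] (hconn : G.Connected) (hcubic : ∀ v, G.degree v = 3)
    (A J : Finset V) (hdisj : Disjoint A J) (hcover : A ∪ J = Finset.univ)
    (hforest : ∃ A₁ A₂ : Finset V, Disjoint A₁ A₂ ∧ A₁ ∪ A₂ = A ∧
      A₁.Nonempty ∧ A₂.Nonempty ∧
      (G.induce (↑A₁ : Set V)).IsTree ∧ (G.induce (↑A₂ : Set V)).IsTree ∧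
      ∀ u ∈ A₁, ∀ v ∈ A₂, ¬ G.Adj u v)
    (hind : ∀ u ∈ J, ∀ v ∈ J, ¬ G.Adj u v) :
    ∃ T : SimpleGraph V, T ≤ G ∧ T.IsTree ∧
      ∃ c : (G \ T).ConnectedComponent,
        Odd ((cotreeCompEdges (G \ T) c).ncard) ∧
        ∀ c' : (G \ T).ConnectedComponent,
          Odd ((cotreeCompEdges (G \ T) c').ncard) → c' = c := by
  classical
  obtain ⟨A₁, A₂, h12disj, hAunion, hA1ne, hA2ne, htree1, htree2, h12⟩ := hforest
  have hA1A : ∀ {v : V}, v ∈ A₁ → v ∈ A := fun hv => hAunion ▸ mem_union_left _ hv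
  have hA2A : ∀ {v : V}, v ∈ A₂ → v ∈ A := fun hv => hAunion ▸ mem_union_right _ hv
  have hAJ : ∀ {v : V}, v ∈ A → v ∉ J := fun hv hj => (Finset.disjoint_left.1 hdisj) hv hj
  have hJA : ∀ {v : V}, v ∈ J → v ∉ A := fun hv hj => (Finset.disjoint_left.1 hdisj) hj hv
  have h12' : ∀ {v : V}, v ∈ A₁ → v ∉ A₂ := fun hv hj => (Finset.disjoint_left.1 h12disj) hv hj
  have hcases : ∀ v : V, v ∈ A₁ ∨ v ∈ A₂ ∨ v ∈ J := by
    intro v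
    have hv : v ∈ A ∪ J := hcover ▸ mem_univ v
    rcases mem_union.1 hv with h | h
    · rcases mem_union.1 (hAunion ▸ h : v ∈ A₁ ∪ A₂) with h | h
      · exact Or.inl h
      · exact Or.inr (Or.inl h)
    · exact Or.inr (Or.inr h)
  -- every vertex has a neighbor
  have hnbr : ∀ v : V, ∃ w, G.Adj v w := by
    intro v
    have h3 : 0 < G.degree v := by rw [hcubic v]; norm_num
    obtain ⟨w, hw⟩ := Finset.card_pos.1 h3
    exact ⟨w, (mem_neighborFinset G v w).1 hw⟩
  let f : V → V := fun v => (hnbr v).choose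
  have hf : ∀ v, G.Adj v (f v) := fun v => (hnbr v).choose_spec
  -- existence of j₀ adjacent to both parts
  have hj0ex : ∃ j ∈ J, (∃ a ∈ A₁, G.Adj j a) ∧ (∃ b ∈ A₂, G.Adj j b) := by
    by_contra hno
    push_neg at hno
    obtain ⟨x0, hx0⟩ := hA1ne
    obtain ⟨y0, hy0⟩ := hA2ne
    have hwalk : G.Walk x0 y0 := (hconn x0 y0).some
    have hy0X : y0 ∉ {v : V | v ∈ A₁ ∨ (v ∈ J ∧ ∃ a ∈ A₁, G.Adj v a)} := by
      rintro (h | ⟨h, -⟩)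
      · exact h12' h hy0
      · exact hAJ (hA2A hy0) h
    obtain ⟨u, v, huv, huX, hvX⟩ := Stmt8Aux.exists_crossing hwalk (Or.inl hx0) hy0X
    rcases huX with hu | ⟨huJ, a, haA, hua⟩
    · rcases hcases v with h | h | h
      · exact hvX (Or.inl h)
      · exact h12 u hu v h huv
      · exact hvX (Or.inr ⟨h, u, hu, huv.symm⟩)
    · rcases hcases v with h | h | h
      · exact hvX (Or.inl h)
      · exact hno u huJ ⟨a, haA, hua⟩ v h huv
      · exact hind u huJ v h huv
  obtain ⟨j₀, hj0J, ⟨a₁, ha1, hadj1⟩, ⟨a₂, ha2, hadj2⟩⟩ := hj0ex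
  have hj0A1 : j₀ ∉ A₁ := fun h => hAJ (hA1A h) hj0J
  have hj0A2 : j₀ ∉ A₂ := fun h => hAJ (hA2A h) hj0J
  have ha1j0 : a₁ ≠ j₀ := fun h => hj0A1 (h ▸ ha1)
  have ha2j0 : a₂ ≠ j₀ := fun h => hj0A2 (h ▸ ha2)
  have ha12 : a₁ ≠ a₂ := fun h => h12' ha1 (h ▸ ha2)
  -- the spanning tree
  let T : SimpleGraph V := {
    Adj := fun x y =>
      (x ∈ A₁ ∧ y ∈ A₁ ∧ G.Adj x y) ∨ (x ∈ A₂ ∧ y ∈ A₂ ∧ G.Adj x y) ∨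
      s(x, y) = s(j₀, a₁) ∨ s(x, y) = s(j₀, a₂) ∨
      (∃ j, j ∈ J ∧ j ≠ j₀ ∧ s(x, y) = s(j, f j))
    symm := by
      constructor
      intro x y h
      have hswap : ∀ z w : V, s(y, x) = s(z, w) ↔ s(x, y) = s(z, w) := by
        intro z w; rw [Sym2.eq_swap]
      rcases h with ⟨h1, h2, h3⟩ | ⟨h1, h2, h3⟩ | h | h | ⟨j, hj, hjne, hs⟩
      · exact Or.inl ⟨h2, h1, h3.symm⟩
      · exact Or.inr (Or.inl ⟨h2, h1, h3.symm⟩)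
      · exact Or.inr (Or.inr (Or.inl ((hswap _ _).2 h)))
      · exact Or.inr (Or.inr (Or.inr (Or.inl ((hswap _ _).2 h))))
      · exact Or.inr (Or.inr (Or.inr (Or.inr ⟨j, hj, hjne, (hswap _ _).2 hs⟩)))
    loopless := by
      constructor
      intro x h
      rcases h with ⟨-, -, h3⟩ | ⟨-, -, h3⟩ | h | h | ⟨j, hj, hjne, hs⟩
      · exact G.loopless.irrefl x h3
      · exact G.loopless.irrefl x h3
      · rcases Sym2.eq_iff.1 h with ⟨rfl, rfl⟩ | ⟨rfl, rfl⟩ <;> exact ha1j0 rfl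
      · rcases Sym2.eq_iff.1 h with ⟨rfl, rfl⟩ | ⟨rfl, rfl⟩ <;> exact ha2j0 rfl
      · obtain ⟨h1, h2⟩ | ⟨h1, h2⟩ := Sym2.eq_iff.1 hs
        · exact (hf j).ne (h1.symm.trans h2)
        · exact (hf j).ne (h2.symm.trans h1) }
  have hTle : T ≤ G := by
    intro x y h
    rcases h with ⟨-, -, h3⟩ | ⟨-, -, h3⟩ | h | h | ⟨j, hj, hjne, hs⟩
    · exact h3
    · exact h3
    · rcases Sym2.eq_iff.1 h with ⟨rfl, rfl⟩ | ⟨rfl, rfl⟩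
      · exact hadj1
      · exact hadj1.symm
    · rcases Sym2.eq_iff.1 h with ⟨rfl, rfl⟩ | ⟨rfl, rfl⟩
      · exact hadj2
      · exact hadj2.symm
    · obtain ⟨h1, h2⟩ | ⟨h1, h2⟩ := Sym2.eq_iff.1 hs
      · rw [h1, h2]; exact hf j
      · rw [h1, h2]; exact (hf j).symm
  
  have hfA : ∀ j ∈ J, f j ∈ A := by
    intro j hj
    rcases hcases (f j) with h | h | h
    · exact hA1A h
    · exact hA2A h
    · exact absurd (hf j) (hind j hj (f j) h)
  have hTadj_j0a1 : T.Adj j₀ a₁ := Or.inr (Or.inr (Or.inl rfl))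
  have hTadj_j0a2 : T.Adj j₀ a₂ := Or.inr (Or.inr (Or.inr (Or.inl rfl)))
  have hTJ0 : ∀ x, T.Adj j₀ x ↔ (x = a₁ ∨ x = a₂) := by
    intro x
    constructor
    · intro h
      rcases h with ⟨h1, -, -⟩ | ⟨h1, -, -⟩ | h | h | ⟨j, hj, hjne, hs⟩
      · exact absurd h1 hj0A1
      · exact absurd h1 hj0A2
      · rcases Sym2.eq_iff.1 h with ⟨-, h2⟩ | ⟨h1, -⟩
        · exact Or.inl h2
        · exact absurd h1.symm ha1j0
      · rcases Sym2.eq_iff.1 h with ⟨-, h2⟩ | ⟨h1, -⟩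
        · exact Or.inr h2
        · exact absurd h1.symm ha2j0
      · rcases Sym2.eq_iff.1 hs with ⟨h1, -⟩ | ⟨h1, -⟩
        · exact absurd h1.symm hjne
        · exact absurd (h1 ▸ hfA j hj) (hJA hj0J)
    · rintro (rfl | rfl)
      · exact hTadj_j0a1
      · exact hTadj_j0a2
  have hTJ1 : ∀ j, j ∈ J → j ≠ j₀ → ∀ x, (T.Adj j x ↔ x = f j) := by
    intro j hj hjne x
    constructor
    · intro h
      rcases h with ⟨h1, -, -⟩ | ⟨h1, -, -⟩ | h | h | ⟨j', hj', hjne', hs⟩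
      · exact absurd (hA1A h1) (hJA hj)
      · exact absurd (hA2A h1) (hJA hj)
      · rcases Sym2.eq_iff.1 h with ⟨h1, -⟩ | ⟨h1, -⟩
        · exact absurd h1 hjne
        · exact absurd (hA1A (h1 ▸ ha1)) (hJA hj)
      · rcases Sym2.eq_iff.1 h with ⟨h1, -⟩ | ⟨h1, -⟩
        · exact absurd h1 hjne
        · exact absurd (hA2A (h1 ▸ ha2)) (hJA hj)
      · rcases Sym2.eq_iff.1 hs with ⟨h1, h2⟩ | ⟨h1, -⟩
        · rw [h2, h1]
        · exact absurd (h1 ▸ hfA j' hj') (hJA hj)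
    · rintro rfl
      exact Or.inr (Or.inr (Or.inr (Or.inr ⟨j, hj, hjne, rfl⟩)))
  have hiff1 : ∀ x y, x ∈ A₁ → y ∈ A₁ → (T.Adj x y ↔ G.Adj x y) :=
    fun x y hx hy => ⟨fun h => hTle h, fun h => Or.inl ⟨hx, hy, h⟩⟩
  have hiff2 : ∀ x y, x ∈ A₂ → y ∈ A₂ → (T.Adj x y ↔ G.Adj x y) :=
    fun x y hx hy => ⟨fun h => hTle h, fun h => Or.inr (Or.inl ⟨hx, hy, h⟩)⟩
  let f₁ : G.induce (↑A₁ : Set V) →g T :=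
    ⟨Subtype.val, by
      intro a b hab
      simp only [comap_adj, Function.Embedding.coe_subtype] at hab
      exact Or.inl ⟨a.2, b.2, hab⟩⟩
  let f₂ : G.induce (↑A₂ : Set V) →g T :=
    ⟨Subtype.val, by
      intro a b hab
      simp only [comap_adj, Function.Embedding.coe_subtype] at hab
      exact Or.inr (Or.inl ⟨a.2, b.2, hab⟩)⟩
  have hreach1 : ∀ v ∈ A₁, T.Reachable v a₁ := by
    intro v hv
    exact (htree1.isConnected.preconnected ⟨v, hv⟩ ⟨a₁, ha1⟩).map f₁
  have hreach2 : ∀ v ∈ A₂, T.Reachable v a₂ := by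
    intro v hv
    exact (htree2.isConnected.preconnected ⟨v, hv⟩ ⟨a₂, ha2⟩).map f₂
  have hreach : ∀ v, T.Reachable v a₁ := by
    intro v
    have ha2a1 : T.Reachable a₂ a₁ := (hTadj_j0a2.reachable).symm.trans hTadj_j0a1.reachable
    rcases hcases v with h | h | h
    · exact hreach1 v h
    · exact (hreach2 v h).trans ha2a1
    · by_cases hj : v = j₀
      · subst hj; exact hTadj_j0a1.reachable
      · have hTv : T.Adj v (f v) := (hTJ1 v h hj (f v)).2 rfl
        have hfv := hfA v h
        rcases mem_union.1 (hAunion ▸ hfv : f v ∈ A₁ ∪ A₂) with h' | h'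
        · exact hTv.reachable.trans (hreach1 _ h')
        · exact hTv.reachable.trans ((hreach2 _ h').trans ha2a1)
  have hTconn : T.Connected := by
    haveI : Nonempty V := ⟨a₁⟩
    exact ⟨fun u v => (hreach u).trans (hreach v).symm⟩
  have hstep : ∀ x b, T.Adj x b → x ∈ A → b ∈ A →
      ((x ∈ A₁ ∧ b ∈ A₁) ∨ (x ∈ A₂ ∧ b ∈ A₂)) := by
    intro x b h hxA hbA
    rcases h with ⟨h1, h2, -⟩ | ⟨h1, h2, -⟩ | h | h | ⟨j, hj, hjne, hs⟩
    · exact Or.inl ⟨h1, h2⟩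
    · exact Or.inr ⟨h1, h2⟩
    · rcases Sym2.eq_iff.1 h with ⟨h1, -⟩ | ⟨-, h2⟩
      · exact absurd (h1 ▸ hxA) (hJA hj0J)
      · exact absurd (h2 ▸ hbA) (hJA hj0J)
    · rcases Sym2.eq_iff.1 h with ⟨h1, -⟩ | ⟨-, h2⟩
      · exact absurd (h1 ▸ hxA) (hJA hj0J)
      · exact absurd (h2 ▸ hbA) (hJA hj0J)
    · rcases Sym2.eq_iff.1 hs with ⟨h1, -⟩ | ⟨-, h2⟩
      · exact absurd (h1 ▸ hxA) (hJA hj)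
      · exact absurd (h2 ▸ hbA) (hJA hj)
  have hstay : ∀ {x y : V} (q : T.Walk x y), (∀ z ∈ q.support, z ∈ A) →
      ((x ∈ A₁ → ∀ z ∈ q.support, z ∈ A₁) ∧ (x ∈ A₂ → ∀ z ∈ q.support, z ∈ A₂)) := by
    intro x y q
    induction q with
    | nil =>
      intro _
      constructor <;> · intro hx z hz; rw [Walk.mem_support_nil_iff] at hz; rwa [hz]
    | @cons a b c h q ih =>
      intro hq
      have hbA : b ∈ A := hq b (by simp)
      have haA : a ∈ A := hq a (by simp)
      have ihq := ih (fun z hz => hq z (by simp [hz]))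
      constructor
      · intro hx z hz
        have hb1 : b ∈ A₁ := by
          rcases hstep a b h haA hbA with ⟨-, h2⟩ | ⟨h1, -⟩
          · exact h2
          · exact absurd h1 (h12' hx)
        rw [Walk.support_cons] at hz
        rcases List.mem_cons.1 hz with rfl | hz'
        · exact hx
        · exact ihq.1 hb1 z hz'
      · intro hx z hz
        have hb2 : b ∈ A₂ := by
          rcases hstep a b h haA hbA with ⟨h1, -⟩ | ⟨-, h2⟩
          · exact absurd hx (h12' h1)
          · exact h2
        rw [Walk.support_cons] at hz
        rcases List.mem_cons.1 hz with rfl | hz'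
        · exact hx
        · exact ihq.2 hb2 z hz'
  have hTacy : T.IsAcyclic := by
    intro v c hc
    have hJnot : ∀ z ∈ J, z ≠ j₀ → ∀ {v' : V} {c' : T.Walk v' v'}, c'.IsCycle → z ∉ c'.support :=
      fun z hz hzne {v'} {c'} hc' =>
        Stmt8Aux.deg_one_not_mem_support (fun w hw => (hTJ1 z hz hzne w).1 hw) hc'
    by_cases hj0mem : j₀ ∈ c.support
    · obtain ⟨u, h, p, hcp, hp, he⟩ := Stmt8Aux.cycle_cons (c.rotate j₀ hj0mem) (hc.rotate hj0mem)
      have hc' : (Walk.cons h p).IsCycle := hcp ▸ hc.rotate hj0mem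
      obtain ⟨w, h', q', hq⟩ := Stmt8Aux.exists_cons_of_ne h.ne p.reverse
      have hwin : s(j₀, w) ∈ p.edges := by
        have h1 : s(j₀, w) ∈ p.reverse.edges := by rw [hq]; simp
        rw [Walk.edges_reverse] at h1
        exact List.mem_reverse.1 h1
      have huw : u ≠ w := fun h'' => he (h'' ▸ hwin)
      have hu : u = a₁ ∨ u = a₂ := (hTJ0 u).1 h
      have hw : w = a₁ ∨ w = a₂ := (hTJ0 w).1 h'
      have hj0q : j₀ ∉ q'.support := by
        have hrp : p.reverse.IsPath := hp.reverse
        rw [hq, Walk.cons_isPath_iff] at hrp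
        exact hrp.2
      have hsupq : ∀ z ∈ q'.support, z ∈ A := by
        intro z hz
        have hzp : z ∈ p.support := by
          have h1 : z ∈ p.reverse.support := by
            rw [hq, Walk.support_cons]
            exact List.mem_cons_of_mem _ hz
          rwa [Walk.support_reverse, List.mem_reverse] at h1
        rcases hcases z with h1 | h1 | h1
        · exact hA1A h1
        · exact hA2A h1
        · exfalso
          have hzj0 : z ≠ j₀ := fun hzz => hj0q (hzz ▸ hz)
          apply hJnot z h1 hzj0 hc'
          rw [Walk.support_cons]
          exact List.mem_cons_of_mem _ hzp
      rcases hw with rfl | rfl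
      · have hu2 : u = a₂ := by
          rcases hu with rfl | rfl
          · exact absurd rfl huw
          · rfl
        have hmem := (hstay q' hsupq).1 ha1 u (hu2 ▸ Walk.end_mem_support q')
        exact h12' hmem (hu2 ▸ ha2)
      · have hu1 : u = a₁ := by
          rcases hu with rfl | rfl
          · rfl
          · exact absurd rfl huw
        have hmem := (hstay q' hsupq).2 ha2 u (hu1 ▸ Walk.end_mem_support q')
        exact h12' (hu1 ▸ ha1) hmem
    · have hsupA : ∀ z ∈ c.support, z ∈ A := by
        intro z hz
        rcases hcases z with h1 | h1 | h1
        · exact hA1A h1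
        · exact hA2A h1
        · exfalso
          have hzj0 : z ≠ j₀ := fun hzz => hj0mem (hzz ▸ hz)
          exact hJnot z h1 hzj0 hc hz
      have hvA : v ∈ A := hsupA v c.start_mem_support
      rcases mem_union.1 (hAunion ▸ hvA : v ∈ A₁ ∪ A₂) with hv | hv
      · exact Stmt8Aux.no_cycle_in_part htree1.IsAcyclic hiff1 c hc ((hstay c hsupA).1 hv)
      · exact Stmt8Aux.no_cycle_in_part htree2.IsAcyclic hiff2 c hc ((hstay c hsupA).2 hv)
  
  -- cotree analysis
  have hHle : G \ T ≤ G := sdiff_le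
  have hHJ : ∀ {x y : V}, (G \ T).Adj x y → (x ∈ J ∨ y ∈ J) := by
    intro x y h
    rw [sdiff_adj] at h
    obtain ⟨hg, hnt⟩ := h
    rcases hcases x with hx | hx | hx
    · rcases hcases y with hy | hy | hy
      · exact absurd (Or.inl ⟨hx, hy, hg⟩) hnt
      · exact absurd hg (h12 x hx y hy)
      · exact Or.inr hy
    · rcases hcases y with hy | hy | hy
      · exact absurd hg.symm (h12 y hy x hx)
      · exact absurd (Or.inr (Or.inl ⟨hx, hy, hg⟩)) hnt
      · exact Or.inr hy
    · exact Or.inl hx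
  -- degrees in the cotree
  have hdeg0 : (G \ T).degree j₀ = 1 := by
    have hnb : (G \ T).neighborFinset j₀ = G.neighborFinset j₀ \ {a₁, a₂} := by
      ext x
      rw [mem_neighborFinset, mem_sdiff, mem_neighborFinset, sdiff_adj, hTJ0 x]
      simp only [mem_insert, mem_singleton]
    have hsubset : ({a₁, a₂} : Finset V) ⊆ G.neighborFinset j₀ := by
      intro x hx
      rcases mem_insert.1 hx with rfl | hx
      · exact (mem_neighborFinset G j₀ _).2 hadj1
      · rw [mem_singleton] at hx
        subst hx
        exact (mem_neighborFinset G j₀ _).2 hadj2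
    have hcard2 : ({a₁, a₂} : Finset V).card = 2 := by
      rw [card_insert_of_notMem (by simp [ha12]), card_singleton]
    show ((G \ T).neighborFinset j₀).card = 1
    rw [hnb, card_sdiff_of_subset hsubset, hcard2]
    have : (G.neighborFinset j₀).card = 3 := hcubic j₀
    omega
  have hdegj : ∀ j ∈ J, j ≠ j₀ → (G \ T).degree j = 2 := by
    intro j hj hjne
    have hnb : (G \ T).neighborFinset j = G.neighborFinset j \ {f j} := by
      ext x
      rw [mem_neighborFinset, mem_sdiff, mem_neighborFinset, sdiff_adj, hTJ1 j hj hjne x]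
      simp only [mem_singleton]
    have hsubset : ({f j} : Finset V) ⊆ G.neighborFinset j := by
      intro x hx
      rw [mem_singleton] at hx
      subst hx
      exact (mem_neighborFinset G j _).2 (hf j)
    show ((G \ T).neighborFinset j).card = 2
    rw [hnb, card_sdiff_of_subset hsubset, card_singleton]
    have : (G.neighborFinset j).card = 3 := hcubic j
    omega
  -- incidence sets of distinct J-vertices are disjoint
  have hdisjinc : ∀ jx ∈ J, ∀ jy ∈ J, jx ≠ jy →
      Disjoint ((G \ T).incidenceFinset jx) ((G \ T).incidenceFinset jy) := by
    intro jx hjx jy hjy hne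
    rw [Finset.disjoint_left]
    intro e hex hey
    rw [mem_incidenceFinset] at hex hey
    have hee : e = s(jx, jy) := (Sym2.mem_and_mem_iff hne).1 ⟨hex.2, hey.2⟩
    have : (G \ T).Adj jx jy := (G \ T).mem_edgeSet.1 (hee ▸ hex.1)
    exact hind jx hjx jy hjy (hHle this)
  have hsum : ∀ S : Finset V, S ⊆ J →
      ((S.biUnion fun j => (G \ T).incidenceFinset j).card = ∑ j ∈ S, (G \ T).degree j) := by
    intro S hS
    rw [card_biUnion (fun x hx y hy hxy => hdisjinc x (hS hx) y (hS hy) hxy)]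
    exact sum_congr rfl fun j _ => card_incidenceFinset_eq_degree _ _
  -- the edge set of each component
  have hcompeq : ∀ c : (G \ T).ConnectedComponent, cotreeCompEdges (G \ T) c =
      ↑((J.filter fun j => (G \ T).connectedComponentMk j = c).biUnion
        fun j => (G \ T).incidenceFinset j) := by
    intro c
    ext e
    induction e with
    | _ x y =>
      simp only [cotreeCompEdges, Set.mem_setOf_eq, Finset.coe_biUnion, Set.mem_iUnion,
        Finset.mem_coe, mem_filter]
      constructor
      · rintro ⟨hedge, hall⟩
        have hxy : (G \ T).Adj x y := (G \ T).mem_edgeSet.1 hedge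
        rcases hHJ hxy with hxJ | hyJ
        · refine ⟨x, ⟨hxJ, hall x (by simp)⟩, ?_⟩
          rw [mem_incidenceFinset]
          exact ⟨hedge, by simp⟩
        · refine ⟨y, ⟨hyJ, hall y (by simp)⟩, ?_⟩
          rw [mem_incidenceFinset]
          exact ⟨hedge, by simp⟩
      · rintro ⟨j, ⟨hjJ, hjc⟩, hei⟩
        rw [mem_incidenceFinset] at hei
        obtain ⟨hedge, hjmem⟩ := hei
        refine ⟨hedge, ?_⟩
        have hxy : (G \ T).Adj x y := (G \ T).mem_edgeSet.1 hedge
        have hcc : (G \ T).connectedComponentMk x = (G \ T).connectedComponentMk y :=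
          ConnectedComponent.sound hxy.reachable
        intro z hz
        rcases Sym2.mem_iff.1 hjmem with rfl | rfl <;>
          rcases Sym2.mem_iff.1 hz with rfl | rfl
        · exact hjc
        · exact hcc.symm.trans hjc
        · exact hcc.trans hjc
        · exact hjc
  
  refine ⟨T, hTle, ⟨hTconn, hTacy⟩, (G \ T).connectedComponentMk j₀, ?_, ?_⟩
  · rw [hcompeq, Set.ncard_coe_finset, hsum _ (filter_subset _ _)]
    set S := J.filter
      (fun j => (G \ T).connectedComponentMk j = (G \ T).connectedComponentMk j₀) with hS
    have hj0S : j₀ ∈ S := mem_filter.2 ⟨hj0J, rfl⟩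
    rw [← Finset.add_sum_erase _ _ hj0S, hdeg0]
    have h2 : ∀ j ∈ S.erase j₀, (G \ T).degree j = 2 := fun j hj =>
      hdegj j (mem_filter.1 (mem_of_mem_erase hj)).1 (ne_of_mem_erase hj)
    rw [Finset.sum_congr rfl h2, Finset.sum_const, smul_eq_mul]
    exact ⟨(S.erase j₀).card, by ring⟩
  · intro c' hodd
    by_contra hne
    rw [hcompeq, Set.ncard_coe_finset, hsum _ (filter_subset _ _)] at hodd
    have h2 : ∀ j ∈ J.filter (fun j => (G \ T).connectedComponentMk j = c'),
        (G \ T).degree j = 2 := by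
      intro j hj
      obtain ⟨hjJ, hjc⟩ := mem_filter.1 hj
      refine hdegj j hjJ fun hjj => hne ?_
      rw [← hjc, hjj]
    rw [Finset.sum_congr rfl h2, Finset.sum_const, smul_eq_mul] at hodd
    obtain ⟨m, hm⟩ := hodd
    omega
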